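/- Let P be a near-Eulerian poset. Then for every x ∈ ∂P the subposet [x,∞) = {y ∈ P : x ≤ y} is near-Eulerian, and for every x ∉ ∂P the subposet [x,∞) is the boundary of an Eulerian poset. -/

import Mathlib

open scoped Classical

noncomputable section

namespace CDIndex
set_option linter.unusedSectionVars false
set_option linter.unusedVariables false
set_option maxHeartbeats 1000000

variable {α β : Type}

/-- The natural rank function of a graded poset: `rho x` is one less than the largest
cardinality of a chain contained in `Set.Iic x` (i.e. the length of a maximal chain of
the interval `[0̂, x]`). -/
def rho [PartialOrder α] (x : α) : ℕ :=
  sSup {k : ℕ | ∃ s : Finset α,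
    IsChain (· ≤ ·) (s : Set α) ∧ (s : Set α) ⊆ Set.Iic x ∧ s.card = k + 1}

/-- A subset `S` of a poset is graded of rank `n` if every maximal chain of `S`
has exactly `n + 1` elements (i.e. length `n`). -/
def IsGradedSetOfRank [PartialOrder α] (S : Set α) (n : ℕ) : Prop :=
  ∀ s : Finset α, (s : Set α) ⊆ S → IsChain (· ≤ ·) (s : Set α) →
    (∀ t : Finset α, (t : Set α) ⊆ S → IsChain (· ≤ ·) (t : Set α) → s ⊆ t → s = t) →
    s.card = n + 1

/-- A poset is graded of rank `n` if every maximal chain has length `n`. -/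
def IsGradedOfRank (α : Type) [PartialOrder α] (n : ℕ) : Prop :=
  IsGradedSetOfRank (Set.univ : Set α) n

/-- Every interval `[s, t]` with `s < t`, `s, t ∈ S`, has equally many elements of even
rank and of odd rank. -/
def BalancedIntervalsIn [PartialOrder α] (S : Set α) : Prop :=
  ∀ s ∈ S, ∀ t ∈ S, s < t →
    {y ∈ Set.Icc s t | Even (rho y)}.ncard = {y ∈ Set.Icc s t | Odd (rho y)}.ncard

/-- An Eulerian poset of rank `n`: a graded poset with `0̂` and `1̂` in which every
interval of positive length has equally many elements of each parity of rank. -/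
def IsEulerianOfRank (α : Type) [PartialOrder α] (n : ℕ) : Prop :=
  (∃ b : α, ∀ z, b ≤ z) ∧ (∃ t : α, ∀ z, z ≤ t) ∧
    IsGradedOfRank α n ∧ BalancedIntervalsIn (Set.univ : Set α)

/-- A lower Eulerian poset of rank `n`: a graded poset with `0̂` all of whose intervals
are Eulerian. -/
def IsLowerEulerianOfRank (α : Type) [PartialOrder α] (n : ℕ) : Prop :=
  (∃ b : α, ∀ z, b ≤ z) ∧ IsGradedOfRank α n ∧ BalancedIntervalsIn (Set.univ : Set α)

/-- A lower order ideal `S` (of a poset) which is lower Eulerian of rank `n`. -/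
def IsLowerEulerianSetOfRank [PartialOrder α] (S : Set α) (n : ℕ) : Prop :=
  IsGradedSetOfRank S n ∧ BalancedIntervalsIn S

/-- The boundary of (a lower order ideal `S` of) a graded poset of rank `n`: the lower
order ideal generated by the rank `n - 1` elements which are covered by exactly one
element. -/
def boundaryIn [PartialOrder α] (S : Set α) (n : ℕ) : Set α :=
  {y | y ∈ S ∧ ∃ x ∈ S, rho x = n - 1 ∧ {z ∈ S | x ⋖ z}.ncard = 1 ∧ y ≤ x}

/-- The boundary `∂P` of a graded poset of rank `n`. -/
def boundary (α : Type) [PartialOrder α] (n : ℕ) : Set α :=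
  boundaryIn (Set.univ : Set α) n

/-- `α` is a near-Eulerian poset of rank `n`: it is obtained from an Eulerian poset `Q`
of rank `n + 1` by removing the maximal element and one element `q` of rank `n`. -/
def IsNearEulerianOfRank (α : Type) [PartialOrder α] [Finite α] (n : ℕ) : Prop :=
  ∃ (Q : Type) (_ : PartialOrder Q) (_ : Finite Q) (q top : Q),
    IsEulerianOfRank Q (n + 1) ∧ (∀ z, z ≤ top) ∧ rho q = n ∧ q ≠ top ∧
    Nonempty (α ≃o {x : Q // x ≠ q ∧ x ≠ top})

/-- `α` is (isomorphic to) the boundary of an Eulerian poset, where `α` has rank `n`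
(so the Eulerian poset has rank `n + 1`). -/
def IsBoundaryOfEulerianOfRank (α : Type) [PartialOrder α] [Finite α] (n : ℕ) : Prop :=
  ∃ (Q : Type) (_ : PartialOrder Q) (_ : Finite Q) (top : Q),
    IsEulerianOfRank Q (n + 1) ∧ (∀ z, z ≤ top) ∧
    Nonempty (α ≃o {x : Q // x ≠ top})

section Machinery

variable {γ : Type} [PartialOrder γ] [Finite γ]

/-- `c` is a maximal chain of `S`. -/
def MaxChainIn (S : Set γ) (c : Finset γ) : Prop :=
  (c : Set γ) ⊆ S ∧ IsChain (· ≤ ·) (c : Set γ) ∧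
    ∀ d : Finset γ, (d : Set γ) ⊆ S → IsChain (· ≤ ·) (d : Set γ) → c ⊆ d → c = d

lemma exists_maxChainIn_superset {S : Set γ} {c : Finset γ}
    (hsub : (c : Set γ) ⊆ S) (hch : IsChain (· ≤ ·) (c : Set γ)) :
    ∃ d : Finset γ, MaxChainIn S d ∧ c ⊆ d := by
  classical
  have := Fintype.ofFinite γ
  set P : Set (Finset γ) := {d | (d : Set γ) ⊆ S ∧ IsChain (· ≤ ·) (d : Set γ) ∧ c ⊆ d}
  obtain ⟨d, hd, hmax⟩ := Set.Finite.exists_maximalFor Finset.card P (Set.toFinite P)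
    ⟨c, hsub, hch, Finset.Subset.refl c⟩
  refine ⟨d, ⟨hd.1, hd.2.1, ?_⟩, hd.2.2⟩
  intro e he hche hde
  have heP : e ∈ P := ⟨he, hche, hd.2.2.trans hde⟩
  have : d.card = e.card := le_antisymm (Finset.card_le_card hde) (hmax heP (Finset.card_le_card hde))
  exact Finset.eq_of_subset_of_card_le hde this.ge

lemma MaxChainIn.mem {S : Set γ} {c : Finset γ} (h : MaxChainIn S c) {a : γ}
    (ha : a ∈ S) (hc : ∀ w ∈ c, a ≤ w ∨ w ≤ a) : a ∈ c := by
  classical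
  have hsub : ((insert a c : Finset γ) : Set γ) ⊆ S := by
    rw [Finset.coe_insert]
    exact Set.insert_subset ha h.1
  have hch : IsChain (· ≤ ·) ((insert a c : Finset γ) : Set γ) := by
    rw [Finset.coe_insert]
    exact h.2.1.insert (fun b hb _ => hc b hb)
  have := h.2.2 _ hsub hch (Finset.subset_insert a c)
  rw [this]; exact Finset.mem_insert_self a c

lemma MaxChainIn.nonempty {S : Set γ} {c : Finset γ} (h : MaxChainIn S c) {a : γ}
    (ha : a ∈ S) (hcomp : ∀ w ∈ S, a ≤ w ∨ w ≤ a) : a ∈ c :=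
  h.mem ha (fun w hw => hcomp w (h.1 hw))

/-- Gluing two maximal chains at a common point `m`. -/
lemma maxChainIn_glue {S S1 S2 : Set γ} {m : γ} {c1 c2 : Finset γ}
    (hm1 : m ∈ S1) (hm2 : m ∈ S2)
    (h12 : ∀ w1 ∈ S1, ∀ w2 ∈ S2, w1 ≤ w2)
    (hS1 : S1 ⊆ S) (hS2 : S2 ⊆ S)
    (hsplit : ∀ w ∈ S, (w ≤ m → w ∈ S1) ∧ (m ≤ w → w ∈ S2))
    (hc1 : MaxChainIn S1 c1) (hc2 : MaxChainIn S2 c2) :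
    MaxChainIn S (c1 ∪ c2) ∧ (c1 ∪ c2).card + 1 = c1.card + c2.card := by
  classical
  have hm1c : m ∈ c1 := hc1.nonempty hm1 (fun w hw => Or.inr (h12 w hw m hm2))
  have hm2c : m ∈ c2 := hc2.nonempty hm2 (fun w hw => Or.inl (h12 m hm1 w hw))
  have hsub : ((c1 ∪ c2 : Finset γ) : Set γ) ⊆ S := by
    rw [Finset.coe_union]
    exact Set.union_subset (hc1.1.trans hS1) (hc2.1.trans hS2)
  have hch : IsChain (· ≤ ·) ((c1 ∪ c2 : Finset γ) : Set γ) := by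
    rw [Finset.coe_union]
    intro x hx y hy hxy
    rcases hx with hx | hx <;> rcases hy with hy | hy
    · exact hc1.2.1 hx hy hxy
    · exact Or.inl (h12 x (hc1.1 hx) y (hc2.1 hy))
    · exact Or.inr (h12 y (hc1.1 hy) x (hc2.1 hx))
    · exact hc2.2.1 hx hy hxy
  have hmax : ∀ d : Finset γ, (d : Set γ) ⊆ S → IsChain (· ≤ ·) (d : Set γ) →
      (c1 ∪ c2) ⊆ d → (c1 ∪ c2) = d := by
    intro d hdS hdch hsubd
    have hmd : m ∈ d := hsubd (Finset.mem_union_left _ hm1c)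
    apply Finset.Subset.antisymm hsubd
    intro w hw
    have hwm : w ≤ m ∨ m ≤ w := by
      rcases eq_or_ne w m with rfl | hne
      · exact Or.inl le_rfl
      · rcases hdch hw hmd hne with h | h
        · exact Or.inl h
        · exact Or.inr h
    rcases hwm with hwm | hwm
    · have hwS1 : w ∈ S1 := (hsplit w (hdS hw)).1 hwm
      have : w ∈ c1 := by
        apply hc1.mem hwS1
        intro v hv
        have hvd : v ∈ d := hsubd (Finset.mem_union_left _ hv)
        rcases eq_or_ne w v with rfl | hne
        · exact Or.inl le_rfl
        · exact hdch hw hvd hne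
      exact Finset.mem_union_left _ this
    · have hwS2 : w ∈ S2 := (hsplit w (hdS hw)).2 hwm
      have : w ∈ c2 := by
        apply hc2.mem hwS2
        intro v hv
        have hvd : v ∈ d := hsubd (Finset.mem_union_right _ hv)
        rcases eq_or_ne w v with rfl | hne
        · exact Or.inl le_rfl
        · exact hdch hw hvd hne
      exact Finset.mem_union_right _ this
  have hinter : c1 ∩ c2 = {m} := by
    apply Finset.Subset.antisymm
    · intro w hw
      rw [Finset.mem_inter] at hw
      have h1 : w ≤ m := h12 w (hc1.1 hw.1) m hm2
      have h2 : m ≤ w := h12 m hm1 w (hc2.1 hw.2)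
      simp [le_antisymm h1 h2]
    · intro w hw
      rw [Finset.mem_singleton] at hw
      subst hw
      exact Finset.mem_inter.2 ⟨hm1c, hm2c⟩
  constructor
  · exact ⟨hsub, hch, hmax⟩
  · have := Finset.card_union_add_card_inter c1 c2
    rw [hinter] at this
    simpa using this


variable {N : ℕ} {b t : γ}

lemma chain_fin_singleton {a : γ} : IsChain (· ≤ ·) (({a} : Finset γ) : Set γ) := by
  simp only [Finset.coe_singleton]
  exact IsChain.singleton

lemma maxChainIn_univ_card (hg : IsGradedOfRank γ N) {c : Finset γ}
    (hc : MaxChainIn Set.univ c) : c.card = N + 1 :=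
  hg c hc.1 hc.2.1 hc.2.2

lemma glue_Iic_Ici {y : γ} {c c3 : Finset γ}
    (hc : MaxChainIn (Set.Iic y) c) (hc3 : MaxChainIn (Set.Ici y) c3) :
    MaxChainIn Set.univ (c ∪ c3) ∧ (c ∪ c3).card + 1 = c.card + c3.card :=
  maxChainIn_glue (Set.mem_Iic.2 le_rfl) (Set.mem_Ici.2 le_rfl)
    (fun w1 h1 w2 h2 => le_trans h1 h2) (Set.subset_univ _) (Set.subset_univ _)
    (fun w _ => ⟨fun h => h, fun h => h⟩) hc hc3

lemma glue_Iic_Icc {a y : γ} (hay : a ≤ y) {c1 c2 : Finset γ}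
    (hc1 : MaxChainIn (Set.Iic a) c1) (hc2 : MaxChainIn (Set.Icc a y) c2) :
    MaxChainIn (Set.Iic y) (c1 ∪ c2) ∧ (c1 ∪ c2).card + 1 = c1.card + c2.card :=
  maxChainIn_glue (Set.mem_Iic.2 le_rfl) (Set.mem_Icc.2 ⟨le_rfl, hay⟩)
    (fun w1 h1 w2 h2 => le_trans h1 h2.1)
    (Set.Iic_subset_Iic.2 hay) (fun w hw => hw.2)
    (fun w hw => ⟨fun h => h, fun h => ⟨h, hw⟩⟩) hc1 hc2

lemma maxChainIn_Iic_card_eq (hg : IsGradedOfRank γ N) {y : γ} {c c' : Finset γ}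
    (hc : MaxChainIn (Set.Iic y) c) (hc' : MaxChainIn (Set.Iic y) c') :
    c.card = c'.card := by
  obtain ⟨c3, hc3, -⟩ := exists_maxChainIn_superset (c := {y}) (S := Set.Ici y)
    (by simp) chain_fin_singleton
  have h1 := glue_Iic_Ici hc hc3
  have h2 := glue_Iic_Ici hc' hc3
  have e1 := maxChainIn_univ_card hg h1.1
  have e2 := maxChainIn_univ_card hg h2.1
  omega

lemma MaxChainIn.self_mem_Iic {y : γ} {c : Finset γ} (hc : MaxChainIn (Set.Iic y) c) :
    y ∈ c :=
  hc.nonempty (Set.mem_Iic.2 le_rfl) (fun w hw => Or.inr hw)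

lemma rho_maxChainIn (hg : IsGradedOfRank γ N) {y : γ} {c : Finset γ}
    (hc : MaxChainIn (Set.Iic y) c) : c.card = rho y + 1 := by
  have hyc : y ∈ c := hc.self_mem_Iic
  have hpos : 1 ≤ c.card := Finset.card_pos.2 ⟨y, hyc⟩
  have hT : {k : ℕ | ∃ s : Finset γ,
      IsChain (· ≤ ·) (s : Set γ) ∧ (s : Set γ) ⊆ Set.Iic y ∧ s.card = k + 1}
      = Set.Iic (c.card - 1) := by
    ext k
    simp only [Set.mem_setOf_eq, Set.mem_Iic]
    constructor
    · rintro ⟨s, hsch, hssub, hscard⟩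
      obtain ⟨d, hd, hsd⟩ := exists_maxChainIn_superset hssub hsch
      have := maxChainIn_Iic_card_eq hg hd hc
      have := Finset.card_le_card hsd
      omega
    · intro hk
      obtain ⟨s, hsc, hscard⟩ := Finset.exists_subset_card_eq (s := c) (n := k + 1) (by omega)
      exact ⟨s, hc.2.1.mono (Finset.coe_subset.2 hsc), (Finset.coe_subset.2 hsc).trans hc.1, hscard⟩
  have : rho y = c.card - 1 := by rw [rho, hT, csSup_Iic]
  omega

lemma MaxChainIn.mem_left_Icc {a y : γ} (hay : a ≤ y) {c : Finset γ}
    (hc : MaxChainIn (Set.Icc a y) c) : a ∈ c ∧ y ∈ c :=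
  ⟨hc.nonempty (Set.mem_Icc.2 ⟨le_rfl, hay⟩) (fun w hw => Or.inl hw.1),
   hc.nonempty (Set.mem_Icc.2 ⟨hay, le_rfl⟩) (fun w hw => Or.inr hw.2)⟩

lemma maxChainIn_Icc_card (hg : IsGradedOfRank γ N) {a y : γ} (hay : a ≤ y) {c2 : Finset γ}
    (hc2 : MaxChainIn (Set.Icc a y) c2) : rho a + c2.card = rho y + 1 := by
  obtain ⟨c1, hc1, -⟩ := exists_maxChainIn_superset (c := {a}) (S := Set.Iic a)
    (by simp) chain_fin_singleton
  have hglue := glue_Iic_Icc hay hc1 hc2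
  have e1 := rho_maxChainIn hg hglue.1
  have e2 := rho_maxChainIn hg hc1
  omega

lemma rho_mono (hg : IsGradedOfRank γ N) {a y : γ} (hay : a ≤ y) : rho a ≤ rho y := by
  obtain ⟨c2, hc2, -⟩ := exists_maxChainIn_superset (c := {a}) (S := Set.Icc a y)
    (by simp [hay]) chain_fin_singleton
  have := maxChainIn_Icc_card hg hay hc2
  have : 1 ≤ c2.card := Finset.card_pos.2 ⟨a, (hc2.mem_left_Icc hay).1⟩
  omega

lemma rho_strict_mono (hg : IsGradedOfRank γ N) {a y : γ} (hay : a < y) :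
    rho a < rho y := by
  obtain ⟨c2, hc2, hsub⟩ := exists_maxChainIn_superset (c := {a, y}) (S := Set.Icc a y)
    (by intro w hw; simp at hw; rcases hw with rfl | rfl <;> simp [hay.le])
    (by intro u hu v hv huv
        simp at hu hv
        rcases hu with rfl | rfl <;> rcases hv with rfl | rfl <;>
          first | exact absurd rfl huv | exact Or.inl hay.le | exact Or.inr hay.le)
  have hcard := maxChainIn_Icc_card hg hay.le hc2
  have h2 : 2 ≤ c2.card := by
    have : ({a, y} : Finset γ).card = 2 := Finset.card_pair hay.ne
    have := Finset.card_le_card hsub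
    omega
  omega

lemma rho_covBy (hg : IsGradedOfRank γ N) {a y : γ} (h : a ⋖ y) :
    rho y = rho a + 1 := by
  obtain ⟨c2, hc2, -⟩ := exists_maxChainIn_superset (c := {a}) (S := Set.Icc a y)
    (by simp [h.le]) chain_fin_singleton
  have hcard := maxChainIn_Icc_card hg h.le hc2
  have : c2 = {a, y} := by
    apply Finset.Subset.antisymm
    · intro w hw
      have hmem := hc2.1 hw
      simp only [Set.mem_Icc] at hmem
      rcases eq_or_lt_of_le hmem.1 with rfl | h1
      · simp
      · rcases eq_or_lt_of_le hmem.2 with rfl | h2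
        · simp
        · exact absurd h2 (h.2 h1)
    · intro w hw
      simp at hw
      rcases hw with rfl | rfl
      exacts [(hc2.mem_left_Icc h.le).1, (hc2.mem_left_Icc h.le).2]
  rw [this, Finset.card_pair h.lt.ne] at hcard
  omega

lemma covBy_of_rho (hg : IsGradedOfRank γ N) {a y : γ} (hay : a < y)
    (hr : rho y = rho a + 1) : a ⋖ y := by
  refine ⟨hay, fun w h1 h2 => ?_⟩
  have := rho_strict_mono hg h1
  have := rho_strict_mono hg h2
  omega

lemma rho_top (hg : IsGradedOfRank γ N) (ht : ∀ z, z ≤ t) : rho t = N := by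
  obtain ⟨c, hc, -⟩ := exists_maxChainIn_superset (c := (∅ : Finset γ)) (S := Set.Iic t)
    (by simp) (by simp)
  have := rho_maxChainIn hg hc
  have huniv : Set.Iic t = Set.univ := Set.eq_univ_of_forall (fun z => ht z)
  rw [huniv] at hc
  have := maxChainIn_univ_card hg hc
  omega

lemma rho_le_rank (hg : IsGradedOfRank γ N) (ht : ∀ z, z ≤ t) (y : γ) : rho y ≤ N := by
  have := rho_mono hg (ht y)
  rw [rho_top hg ht] at this
  exact this

lemma eq_top_of_rho (hg : IsGradedOfRank γ N) (ht : ∀ z, z ≤ t) {y : γ}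
    (hr : N ≤ rho y) : y = t := by
  by_contra hne
  have : y < t := lt_of_le_of_ne (ht y) hne
  have := rho_strict_mono hg this
  rw [rho_top hg ht] at this
  omega

lemma rho_rel (hg : IsGradedOfRank γ N) {a y : γ} (hay : a ≤ y) :
    sSup {k : ℕ | ∃ s : Finset γ,
      IsChain (· ≤ ·) (s : Set γ) ∧ (s : Set γ) ⊆ Set.Icc a y ∧ s.card = k + 1}
      = rho y - rho a := by
  obtain ⟨c, hc, -⟩ := exists_maxChainIn_superset (c := {a}) (S := Set.Icc a y)
    (by simp [hay]) chain_fin_singleton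
  have hcard := maxChainIn_Icc_card hg hay hc
  have hle := rho_mono hg hay
  have hT : {k : ℕ | ∃ s : Finset γ,
      IsChain (· ≤ ·) (s : Set γ) ∧ (s : Set γ) ⊆ Set.Icc a y ∧ s.card = k + 1}
      = Set.Iic (rho y - rho a) := by
    ext k
    simp only [Set.mem_setOf_eq, Set.mem_Iic]
    constructor
    · rintro ⟨s, hsch, hssub, hscard⟩
      obtain ⟨d, hd, hsd⟩ := exists_maxChainIn_superset hssub hsch
      have := maxChainIn_Icc_card hg hay hd
      have := Finset.card_le_card hsd
      omega
    · intro hk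
      obtain ⟨s, hsc, hscard⟩ := Finset.exists_subset_card_eq (s := c) (n := k + 1) (by omega)
      exact ⟨s, hc.2.1.mono (Finset.coe_subset.2 hsc), (Finset.coe_subset.2 hsc).trans hc.1, hscard⟩
  rw [hT, csSup_Iic]


/-- Down: mapping a finset of a subtype to the ambient type. -/
lemma chain_map_val {S : Set γ} {c : Finset ↥S} (h : IsChain (· ≤ ·) (c : Set ↥S)) :
    IsChain (· ≤ ·) ((c.map (Function.Embedding.subtype _) : Finset γ) : Set γ) := by
  rw [Finset.coe_map]
  rintro x hx y hy hxy
  obtain ⟨u, hu, rfl⟩ := hx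
  obtain ⟨v, hv, rfl⟩ := hy
  have huv : u ≠ v := by
    rintro rfl; exact hxy rfl
  rcases h hu hv huv with h' | h'
  · exact Or.inl h'
  · exact Or.inr h'

lemma chain_subtype {S : Set γ} {s : Finset γ} (h : IsChain (· ≤ ·) (s : Set γ)) :
    IsChain (· ≤ ·) ((s.subtype (· ∈ S) : Finset ↥S) : Set ↥S) := by
  rintro ⟨x, hx⟩ hxs ⟨y, hy⟩ hys hxy
  simp only [Finset.mem_coe, Finset.mem_subtype] at hxs hys
  have hne : x ≠ y := fun he => hxy (Subtype.ext he)
  rcases h hxs hys hne with h' | h'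
  · exact Or.inl h'
  · exact Or.inr h'

lemma card_subtype_of_subset {S : Set γ} {s : Finset γ} (h : (s : Set γ) ⊆ S) :
    (s.subtype (· ∈ S)).card = s.card := by
  classical
  have : (s.subtype (· ∈ S)).map (Function.Embedding.subtype _) = s := by
    rw [Finset.subtype_map]
    apply Finset.filter_true_of_mem
    intro x hx
    exact h hx
  calc (s.subtype (· ∈ S)).card
      = ((s.subtype (· ∈ S)).map (Function.Embedding.subtype _)).card :=
        (Finset.card_map _).symm
    _ = s.card := by rw [this]

/-- The rank function on a subtype, expressed via chains in the ambient poset. -/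
lemma rho_subtype_sSup {S : Set γ} (y : ↥S) :
    rho y = sSup {k : ℕ | ∃ s : Finset γ,
      IsChain (· ≤ ·) (s : Set γ) ∧ (s : Set γ) ⊆ S ∩ Set.Iic y.val ∧ s.card = k + 1} := by
  rw [rho]
  congr 1
  ext k
  simp only [Set.mem_setOf_eq]
  constructor
  · rintro ⟨c, hch, hsub, hcard⟩
    refine ⟨c.map (Function.Embedding.subtype _), chain_map_val hch, ?_, by simp [hcard]⟩
    intro w hw
    rw [Finset.coe_map] at hw
    obtain ⟨u, hu, rfl⟩ := hw
    exact ⟨u.2, hsub hu⟩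
  · rintro ⟨s, hch, hsub, hcard⟩
    have hsS : ∀ w ∈ s, w ∈ S := fun w hw => (hsub hw).1
    refine ⟨s.subtype (· ∈ S), chain_subtype hch, ?_, ?_⟩
    · rintro ⟨w, hwS⟩ hw
      simp only [Finset.mem_coe, Finset.mem_subtype] at hw
      exact (hsub hw).2
    · rw [card_subtype_of_subset (fun w hw => hsS w hw), hcard]

/-- If `Iic y.val ⊆ S` then the subtype rank agrees with the ambient rank. -/
lemma rho_subtype_of_Iic_subset {S : Set γ} (y : ↥S) (h : Set.Iic y.val ⊆ S) :
    rho y = rho y.val := by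
  rw [rho_subtype_sSup, rho, Set.inter_eq_right.2 h]

/-- Rank in an interval `[a, t]` regarded as a subtype. -/
lemma rho_subtype_Icc {N : ℕ} (hg : IsGradedOfRank γ N) {a t : γ}
    (y : ↥(Set.Icc a t)) : rho y = rho y.val - rho a := by
  rw [rho_subtype_sSup]
  have hset : Set.Icc a t ∩ Set.Iic y.val = Set.Icc a y.val := by
    ext w
    simp only [Set.mem_inter_iff, Set.mem_Icc, Set.mem_Iic]
    exact ⟨fun h => ⟨h.1.1, h.2⟩, fun h => ⟨⟨h.1, h.2.trans y.2.2⟩, h.2⟩⟩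
  rw [hset]
  exact rho_rel hg y.2.1

/-- Gradedness transfers from a set to the corresponding subtype. -/
lemma isGraded_subtype {S : Set γ} {m : ℕ} (h : IsGradedSetOfRank S m) :
    IsGradedOfRank ↥S m := by
  intro s hsub hch hmax
  classical
  set sv : Finset γ := s.map (Function.Embedding.subtype _) with hsv
  have hsvS : (sv : Set γ) ⊆ S := by
    intro w hw
    rw [hsv, Finset.coe_map] at hw
    obtain ⟨u, hu, rfl⟩ := hw
    exact u.2
  have hsvcard : sv.card = s.card := by simp [hsv]
  rw [← hsvcard]
  apply h sv hsvS (chain_map_val hch)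
  intro d hdS hdch hsvd
  have hds : ∀ w ∈ d, w ∈ S := fun w hw => hdS hw
  set d' : Finset ↥S := d.subtype (· ∈ S) with hd'
  have hsd' : s ⊆ d' := by
    intro w hw
    rw [hd', Finset.mem_subtype]
    have : (w : γ) ∈ sv := by
      rw [hsv, Finset.mem_map]
      exact ⟨w, hw, rfl⟩
    exact hsvd this
  have hd'sub : (d' : Set ↥S) ⊆ Set.univ := Set.subset_univ _
  have heq : s = d' := hmax d' (Set.subset_univ _) (chain_subtype hdch) hsd'
  rw [hsv, heq, hd', Finset.subtype_map]
  exact Finset.filter_true_of_mem (fun x hx => hdS hx)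


/-- The chain-set defining `rho` is mapped into the corresponding one by an order iso. -/
lemma rho_set_subset_orderIso {β δ : Type} [PartialOrder β] [PartialOrder δ]
    (e : β ≃o δ) (x : β) :
    {k : ℕ | ∃ s : Finset β,
      IsChain (· ≤ ·) (s : Set β) ∧ (s : Set β) ⊆ Set.Iic x ∧ s.card = k + 1} ⊆
    {k : ℕ | ∃ s : Finset δ,
      IsChain (· ≤ ·) (s : Set δ) ∧ (s : Set δ) ⊆ Set.Iic (e x) ∧ s.card = k + 1} := by
  rintro k ⟨s, hch, hsub, hcard⟩
  classical
  refine ⟨s.map e.toEquiv.toEmbedding, ?_, ?_, by simp [hcard]⟩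
  · rw [Finset.coe_map]
    rintro u hu v hv huv
    obtain ⟨u', hu', rfl⟩ := hu
    obtain ⟨v', hv', rfl⟩ := hv
    have : u' ≠ v' := fun h => huv (by rw [h])
    rcases hch hu' hv' this with h | h
    · exact Or.inl (by simpa using e.le_iff_le.2 h)
    · exact Or.inr (by simpa using e.le_iff_le.2 h)
  · rw [Finset.coe_map]
    rintro u hu
    obtain ⟨u', hu', rfl⟩ := hu
    simpa using e.le_iff_le.2 (hsub hu')

lemma rho_orderIso {β δ : Type} [PartialOrder β] [PartialOrder δ] (e : β ≃o δ) (x : β) :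
    rho (e x) = rho x := by
  rw [rho, rho]
  congr 1
  apply Set.Subset.antisymm
  · have := rho_set_subset_orderIso e.symm (e x)
    rwa [e.symm_apply_apply] at this
  · exact rho_set_subset_orderIso e x

lemma ncard_covers_orderIso {β δ : Type} [PartialOrder β] [PartialOrder δ] (e : β ≃o δ)
    (x : β) : {z : δ | e x ⋖ z}.ncard = {z : β | x ⋖ z}.ncard := by
  rw [← Set.ncard_image_of_injective {z : β | x ⋖ z} e.injective]
  congr 1
  ext w
  simp only [Set.mem_setOf_eq, Set.mem_image]
  constructor
  · intro hw
    refine ⟨e.symm w, ?_, e.apply_symm_apply w⟩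
    have : e x ⋖ e (e.symm w) := by rwa [e.apply_symm_apply]
    exact (apply_covBy_apply_iff e).1 this
  · rintro ⟨z, hz, rfl⟩
    exact (apply_covBy_apply_iff e).2 hz

variable {γ : Type} [PartialOrder γ] [Finite γ] {N : ℕ} {t : γ}

/-- The diamond property in an Eulerian poset: an element of corank 2 is covered by
exactly two elements. -/
lemma diamond (hg : IsGradedOfRank γ N) (ht : ∀ z, z ≤ t)
    (hbal : BalancedIntervalsIn (Set.univ : Set γ)) {x' : γ} (hx' : rho x' + 2 = N) :
    {z : γ | x' ⋖ z}.ncard = 2 := by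
  have hrt : rho t = N := rho_top hg ht
  have hlt : x' < t := by
    rcases eq_or_lt_of_le (ht x') with rfl | h
    · omega
    · exact h
  set m := rho x' with hm
  have hmid : ∀ y, y ∈ Set.Icc x' t → y ≠ x' → y ≠ t → rho y = m + 1 := by
    rintro y ⟨h1, h2⟩ hy1 hy2
    have := rho_strict_mono hg (lt_of_le_of_ne h1 (Ne.symm hy1))
    have := rho_strict_mono hg (lt_of_le_of_ne h2 hy2)
    omega
  have hMeq : {z : γ | x' ⋖ z} = {y ∈ Set.Icc x' t | y ≠ x' ∧ y ≠ t} := by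
    ext z
    simp only [Set.mem_setOf_eq, Set.mem_sep_iff]
    constructor
    · intro hz
      have hz1 : rho z = m + 1 := by rw [rho_covBy hg hz]
      refine ⟨⟨hz.le, ht z⟩, ?_, ?_⟩
      · intro h; rw [h] at hz1; omega
      · intro h; rw [h, hrt] at hz1; omega
    · rintro ⟨hmem, h1, h2⟩
      have hz1 : rho z = m + 1 := hmid z hmem h1 h2
      exact covBy_of_rho hg (lt_of_le_of_ne hmem.1 (Ne.symm h1)) hz1
  have hbal' := hbal x' (Set.mem_univ _) t (Set.mem_univ _) hlt
  have hpair : ({x', t} : Set γ).ncard = 2 := Set.ncard_pair hlt.ne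
  rcases Nat.even_or_odd m with he | ho
  · have hEeq : {y ∈ Set.Icc x' t | Even (rho y)} = {x', t} := by
      ext y
      simp only [Set.mem_sep_iff, Set.mem_insert_iff, Set.mem_singleton_iff]
      constructor
      · rintro ⟨hy, hev⟩
        by_cases h1 : y = x'
        · exact Or.inl h1
        by_cases h2 : y = t
        · exact Or.inr h2
        rw [hmid y hy h1 h2] at hev
        exact absurd he (Nat.even_add_one.mp hev)
      · rintro (rfl | rfl)
        · exact ⟨⟨le_rfl, hlt.le⟩, he⟩
        · exact ⟨⟨hlt.le, le_rfl⟩, by rw [hrt, ← hx']; exact he.add even_two⟩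
    have hOeq : {y ∈ Set.Icc x' t | Odd (rho y)} = {y ∈ Set.Icc x' t | y ≠ x' ∧ y ≠ t} := by
      ext y
      simp only [Set.mem_sep_iff]
      constructor
      · rintro ⟨hy, hodd⟩
        refine ⟨hy, ?_, ?_⟩
        · rintro rfl; exact (Nat.not_odd_iff_even.mpr he) hodd
        · rintro rfl
          rw [hrt, ← hx'] at hodd
          exact (Nat.not_odd_iff_even.mpr (he.add even_two)) hodd
      · rintro ⟨hy, h1, h2⟩
        exact ⟨hy, by rw [hmid y hy h1 h2]; exact he.add_one⟩
    rw [hMeq, ← hOeq, ← hbal', hEeq, hpair]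
  · have hEeq : {y ∈ Set.Icc x' t | Even (rho y)} = {y ∈ Set.Icc x' t | y ≠ x' ∧ y ≠ t} := by
      ext y
      simp only [Set.mem_sep_iff]
      constructor
      · rintro ⟨hy, hev⟩
        refine ⟨hy, ?_, ?_⟩
        · rintro rfl; exact (Nat.not_even_iff_odd.mpr ho) hev
        · rintro rfl
          rw [hrt, ← hx'] at hev
          exact (Nat.not_even_iff_odd.mpr (ho.add_even even_two)) hev
      · rintro ⟨hy, h1, h2⟩
        exact ⟨hy, by rw [hmid y hy h1 h2]; exact ho.add_one⟩
    have hOeq : {y ∈ Set.Icc x' t | Odd (rho y)} = {x', t} := by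
      ext y
      simp only [Set.mem_sep_iff, Set.mem_insert_iff, Set.mem_singleton_iff]
      constructor
      · rintro ⟨hy, hodd⟩
        by_cases h1 : y = x'
        · exact Or.inl h1
        by_cases h2 : y = t
        · exact Or.inr h2
        rw [hmid y hy h1 h2] at hodd
        exact absurd hodd (by simp [Nat.odd_add_one, Nat.not_even_iff_odd.mpr ho])
      · rintro (rfl | rfl)
        · exact ⟨⟨le_rfl, hlt.le⟩, ho⟩
        · exact ⟨⟨hlt.le, le_rfl⟩, by rw [hrt, ← hx']; exact ho.add_even even_two⟩
    rw [hMeq, ← hEeq, hbal', hOeq, hpair]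

/-- Below any element there is one covered by a given strictly larger element. -/
lemma exists_covBy_between (hg : IsGradedOfRank γ N) {v q : γ} (hvq : v < q) :
    ∃ z, v ≤ z ∧ z ⋖ q := by
  have key : ∀ k v, rho q - rho v ≤ k → v < q → ∃ z, v ≤ z ∧ z ⋖ q := by
    intro k
    induction k with
    | zero =>
      intro v hk hvq
      have := rho_strict_mono hg hvq
      omega
    | succ k ih =>
      intro v hk hvq
      by_cases hcov : v ⋖ q
      · exact ⟨v, le_rfl, hcov⟩
      · have : ∃ w, v < w ∧ w < q := by
          by_contra hno
          push_neg at hno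
          exact hcov ⟨hvq, fun w h1 h2 => (hno w h1) h2⟩
        obtain ⟨w, hw1, hw2⟩ := this
        obtain ⟨z, hz1, hz2⟩ := ih w (by have := rho_strict_mono hg hw1; omega) hw2
        exact ⟨z, hw1.le.trans hz1, hz2⟩
  exact key _ v le_rfl hvq


lemma isGradedSet_Icc (hg : IsGradedOfRank γ N) (ht : ∀ z, z ≤ t) (v : γ) :
    IsGradedSetOfRank (Set.Icc v t) (N - rho v) := by
  intro s h1 h2 h3
  have hc : MaxChainIn (Set.Icc v t) s := ⟨h1, h2, h3⟩
  have := maxChainIn_Icc_card hg (ht v) hc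
  have h4 := rho_top hg ht
  have h5 := rho_le_rank hg ht v
  omega

/-- `BalancedIntervalsIn` for the subtype `[v, t]`. -/
lemma balanced_Icc_subtype (hg : IsGradedOfRank γ N) (ht : ∀ z, z ≤ t)
    (hbal : BalancedIntervalsIn (Set.univ : Set γ)) (v : γ) :
    BalancedIntervalsIn (Set.univ : Set ↥(Set.Icc v t)) := by
  intro s' _ t' _ hlt
  have hlt' : s'.val < t'.val := hlt
  have key : ∀ P : ℕ → Prop,
      {y : ↥(Set.Icc v t) | y ∈ Set.Icc s' t' ∧ P (rho y)}.ncard =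
      {w : γ | w ∈ Set.Icc s'.val t'.val ∧ P (rho w - rho v)}.ncard := by
    intro P
    rw [← Set.ncard_image_of_injective _ (Subtype.val_injective
      (p := fun x => x ∈ Set.Icc v t))]
    congr 1
    ext w
    simp only [Set.mem_image, Set.mem_setOf_eq, Set.mem_Icc]
    constructor
    · rintro ⟨y, ⟨⟨hy1, hy2⟩, hP⟩, rfl⟩
      rw [rho_subtype_Icc hg y] at hP
      exact ⟨⟨hy1, hy2⟩, hP⟩
    · rintro ⟨⟨hw1, hw2⟩, hP⟩
      have hwv : v ≤ w := s'.2.1.trans hw1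
      have hwt : w ≤ t := hw2.trans t'.2.2
      refine ⟨⟨w, hwv, hwt⟩, ⟨⟨?_, ?_⟩, ?_⟩, rfl⟩
      · exact Subtype.coe_le_coe.1 hw1
      · exact Subtype.coe_le_coe.1 hw2
      · rw [rho_subtype_Icc hg ⟨w, hwv, hwt⟩]
        exact hP
  have hge : ∀ w ∈ Set.Icc s'.val t'.val, rho v ≤ rho w :=
    fun w hw => rho_mono hg ((s'.2.1.trans hw.1))
  have hbal' := hbal s'.val (Set.mem_univ _) t'.val (Set.mem_univ _) hlt'
  rcases Nat.even_or_odd (rho v) with he | ho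
  · have e1 : {w : γ | w ∈ Set.Icc s'.val t'.val ∧ Even (rho w - rho v)} =
        {w ∈ Set.Icc s'.val t'.val | Even (rho w)} := by
      ext w
      simp only [Set.mem_setOf_eq, Set.mem_sep_iff]
      constructor
      · rintro ⟨hw, hP⟩
        exact ⟨hw, ((Nat.even_sub (hge w hw)).1 hP).2 he⟩
      · rintro ⟨hw, hP⟩
        exact ⟨hw, (Nat.even_sub (hge w hw)).2 (iff_of_true hP he)⟩
    have e2 : {w : γ | w ∈ Set.Icc s'.val t'.val ∧ Odd (rho w - rho v)} =
        {w ∈ Set.Icc s'.val t'.val | Odd (rho w)} := by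
      ext w
      simp only [Set.mem_setOf_eq, Set.mem_sep_iff, ← Nat.not_even_iff_odd]
      constructor
      · rintro ⟨hw, hP⟩
        refine ⟨hw, fun hc => hP ((Nat.even_sub (hge w hw)).2 (iff_of_true hc he))⟩
      · rintro ⟨hw, hP⟩
        refine ⟨hw, fun hc => hP (((Nat.even_sub (hge w hw)).1 hc).2 he)⟩
    rw [key, key, e1, e2]
    exact hbal'
  · have e1 : {w : γ | w ∈ Set.Icc s'.val t'.val ∧ Even (rho w - rho v)} =
        {w ∈ Set.Icc s'.val t'.val | Odd (rho w)} := by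
      ext w
      simp only [Set.mem_setOf_eq, Set.mem_sep_iff, ← Nat.not_even_iff_odd]
      constructor
      · rintro ⟨hw, hP⟩
        refine ⟨hw, fun hc => (Nat.not_even_iff_odd.2 ho) (((Nat.even_sub (hge w hw)).1 hP).1 hc)⟩
      · rintro ⟨hw, hP⟩
        refine ⟨hw, (Nat.even_sub (hge w hw)).2 (iff_of_false hP (Nat.not_even_iff_odd.2 ho))⟩
    have e2 : {w : γ | w ∈ Set.Icc s'.val t'.val ∧ Odd (rho w - rho v)} =
        {w ∈ Set.Icc s'.val t'.val | Even (rho w)} := by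
      ext w
      simp only [Set.mem_setOf_eq, Set.mem_sep_iff, ← Nat.not_even_iff_odd]
      constructor
      · rintro ⟨hw, hP⟩
        refine ⟨hw, ?_⟩
        by_contra hc
        exact hP ((Nat.even_sub (hge w hw)).2 (iff_of_false hc (Nat.not_even_iff_odd.2 ho)))
      · rintro ⟨hw, hP⟩
        exact ⟨hw, fun hc => (Nat.not_even_iff_odd.2 ho) (((Nat.even_sub (hge w hw)).1 hc).1 hP)⟩
    rw [key, key, e1, e2]
    exact hbal'.symm


/-- In the complement of `{q, t}`, lower sets of elements are untouched. -/
lemma Iic_subset_compl (hg : IsGradedOfRank γ (n + 1)) (ht : ∀ z, z ≤ t)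
    (hq : rho q = n) {z : γ} (hzq : z ≠ q) (hzt : z ≠ t) :
    Set.Iic z ⊆ {w : γ | w ≠ q ∧ w ≠ t} := by
  intro w hw
  constructor
  · rintro rfl
    rcases eq_or_lt_of_le (hw : w ≤ z) with rfl | h
    · exact hzq rfl
    · have := rho_strict_mono hg h
      rw [hq] at this
      exact hzt (eq_top_of_rho hg ht (by omega))
  · rintro rfl
    exact hzt (le_antisymm hw (ht z)).symm

/-- rank is preserved in the complement subtype. -/
lemma rho_compl (hg : IsGradedOfRank γ (n + 1)) (ht : ∀ z, z ≤ t) (hq : rho q = n)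
    (y : ↥{w : γ | w ≠ q ∧ w ≠ t}) : rho y = rho y.val :=
  rho_subtype_of_Iic_subset y (Iic_subset_compl hg ht hq y.2.1 y.2.2)

/-- Covers in the complement subtype are exactly the covers in the ambient poset which
lie in the complement. -/
lemma covers_compl (hg : IsGradedOfRank γ (n + 1)) (ht : ∀ z, z ≤ t) (hq : rho q = n)
    (v' : ↥{w : γ | w ≠ q ∧ w ≠ t}) :
    Subtype.val '' {z : ↥{w : γ | w ≠ q ∧ w ≠ t} | v' ⋖ z} =
      {z : γ | v'.val ⋖ z ∧ z ≠ q ∧ z ≠ t} := by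
  ext w
  simp only [Set.mem_image, Set.mem_setOf_eq]
  constructor
  · rintro ⟨z, hz, rfl⟩
    have hzcov : v' ⋖ z := hz
    refine ⟨⟨Subtype.coe_lt_coe.2 hzcov.lt, ?_⟩, z.2.1, z.2.2⟩
    intro u h1 h2
    by_cases huq : u = q
    · rw [huq] at h1 h2
      have hcov1 : v'.val ⋖ q := by
        refine ⟨h1, fun u' h1' h2' => ?_⟩
        have hu'q : u' ≠ q := h2'.ne
        have hu't : u' ≠ t := (lt_of_lt_of_le (h2'.trans h2) (ht z.val)).ne
        exact absurd (show (⟨u', hu'q, hu't⟩ : ↥{w : γ | w ≠ q ∧ w ≠ t}) < z from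
            Subtype.coe_lt_coe.1 (h2'.trans h2))
          (hzcov.2 (Subtype.coe_lt_coe.1 h1'))
      have hcov2 : q ⋖ z.val := by
        refine ⟨h2, fun u' h1' h2' => ?_⟩
        have hu'q : u' ≠ q := h1'.ne'
        have hu't : u' ≠ t := (h2'.trans_le (ht z.val)).ne
        exact absurd (show (⟨u', hu'q, hu't⟩ : ↥{w : γ | w ≠ q ∧ w ≠ t}) < z from
            Subtype.coe_lt_coe.1 h2')
          (hzcov.2 (Subtype.coe_lt_coe.1 (h1.trans h1')))
      have hzn : rho z.val = n + 1 := by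
        rw [rho_covBy hg hcov2, hq]
      exact z.2.2 (eq_top_of_rho hg ht hzn.ge)
    · have hut : u ≠ t := (h2.trans_le (ht z.val)).ne
      exact absurd (show (⟨u, huq, hut⟩ : ↥{w : γ | w ≠ q ∧ w ≠ t}) < z from
          Subtype.coe_lt_coe.1 h2)
        (hzcov.2 (Subtype.coe_lt_coe.1 h1))
  · rintro ⟨hcov, hwq, hwt⟩
    refine ⟨⟨w, hwq, hwt⟩, ⟨Subtype.coe_lt_coe.1 hcov.lt, ?_⟩, rfl⟩
    intro u h1 h2
    exact hcov.2 (Subtype.coe_lt_coe.2 h1) (Subtype.coe_lt_coe.2 h2)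

/-- The number of covers, within the complement, of an element of corank 2. -/
lemma covers_compl_ncard (hg : IsGradedOfRank γ (n + 1)) (ht : ∀ z, z ≤ t)
    (hbal : BalancedIntervalsIn (Set.univ : Set γ)) (hq : rho q = n) (hqt : q ≠ t)
    (v' : ↥{w : γ | w ≠ q ∧ w ≠ t}) (hρ : rho v'.val + 2 = n + 1) :
    ({z : ↥{w : γ | w ≠ q ∧ w ≠ t} | v' ⋖ z}.ncard = 1 ↔ v'.val ⋖ q) := by
  have hcard : {z : γ | v'.val ⋖ z}.ncard = 2 := diamond hg ht hbal hρ
  have hnt : ∀ z, v'.val ⋖ z → z ≠ t := by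
    intro z hz h
    have h1 := rho_covBy hg hz
    have h2 := rho_top hg ht
    rw [h] at h1
    omega
  have heq : {z : γ | v'.val ⋖ z ∧ z ≠ q ∧ z ≠ t} = {z : γ | v'.val ⋖ z} \ {q} := by
    ext z
    simp only [Set.mem_setOf_eq, Set.mem_diff, Set.mem_singleton_iff]
    exact ⟨fun h => ⟨h.1, h.2.1⟩, fun h => ⟨h.1, h.2, hnt z h.1⟩⟩
  have himg : {z : ↥{w : γ | w ≠ q ∧ w ≠ t} | v' ⋖ z}.ncard
      = ({z : γ | v'.val ⋖ z} \ {q}).ncard := by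
    rw [← heq, ← covers_compl hg ht hq v',
      Set.ncard_image_of_injective _ Subtype.val_injective]
  rw [himg]
  by_cases hmem : v'.val ⋖ q
  · have : q ∈ {z : γ | v'.val ⋖ z} := hmem
    rw [Set.ncard_diff_singleton_of_mem this, hcard]
    simp [hmem]
  · have : q ∉ {z : γ | v'.val ⋖ z} := hmem
    rw [Set.diff_singleton_eq_self this, hcard]
    simp [hmem]


/-- Case A isomorphism. -/
lemma iso_Ici_near {α Q : Type} [PartialOrder α] [PartialOrder Q] {q top : Q}
    (htop : ∀ z, z ≤ top) (e : α ≃o {z : Q // z ≠ q ∧ z ≠ top}) (x : α)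
    (hvq : (e x).val ≤ q) :
    Nonempty ((↥(Set.Ici x)) ≃o
      {y : ↥(Set.Icc (e x).val top) //
        y ≠ ⟨q, hvq, htop q⟩ ∧ y ≠ ⟨top, htop (e x).val, le_rfl⟩}) := by
  refine ⟨⟨⟨fun y => ⟨⟨(e y.val).val,
      Subtype.coe_le_coe.2 (e.le_iff_le.2 y.2), htop _⟩,
      fun h => (e y.val).2.1 (congrArg Subtype.val h),
      fun h => (e y.val).2.2 (congrArg Subtype.val h)⟩,
    fun z => ⟨e.symm ⟨z.val.val,
        fun h => z.2.1 (Subtype.ext h), fun h => z.2.2 (Subtype.ext h)⟩,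
      e.le_symm_apply.2 (Subtype.coe_le_coe.1 z.val.2.1)⟩,
    ?_, ?_⟩, ?_⟩⟩
  · intro y
    apply Subtype.ext
    exact e.symm_apply_eq.2 (Subtype.ext rfl)
  · intro z
    apply Subtype.ext
    apply Subtype.ext
    show ((e (e.symm _)) : {z : Q // z ≠ q ∧ z ≠ top}).val = _
    rw [e.apply_symm_apply]
  · intro a b
    constructor
    · intro hab
      exact Subtype.coe_le_coe.1 (e.le_iff_le.1 (Subtype.coe_le_coe.1 hab))
    · intro hab
      exact Subtype.coe_le_coe.2 (e.le_iff_le.2 hab)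

/-- Case B isomorphism. -/
lemma iso_Ici_boundary {α Q : Type} [PartialOrder α] [PartialOrder Q] {q top : Q}
    (htop : ∀ z, z ≤ top) (e : α ≃o {z : Q // z ≠ q ∧ z ≠ top}) (x : α)
    (hnq : ∀ z : Q, (e x).val ≤ z → z ≠ q) :
    Nonempty ((↥(Set.Ici x)) ≃o
      {y : ↥(Set.Icc (e x).val top) // y ≠ ⟨top, htop (e x).val, le_rfl⟩}) := by
  refine ⟨⟨⟨fun y => ⟨⟨(e y.val).val,
      Subtype.coe_le_coe.2 (e.le_iff_le.2 y.2), htop _⟩,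
      fun h => (e y.val).2.2 (congrArg Subtype.val h)⟩,
    fun z => ⟨e.symm ⟨z.val.val,
        hnq z.val.val z.val.2.1, fun h => z.2 (Subtype.ext h)⟩,
      e.le_symm_apply.2 (Subtype.coe_le_coe.1 z.val.2.1)⟩,
    ?_, ?_⟩, ?_⟩⟩
  · intro y
    apply Subtype.ext
    exact e.symm_apply_eq.2 (Subtype.ext rfl)
  · intro z
    apply Subtype.ext
    apply Subtype.ext
    show ((e (e.symm _)) : {z : Q // z ≠ q ∧ z ≠ top}).val = _
    rw [e.apply_symm_apply]
  · intro a b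
    constructor
    · intro hab
      exact Subtype.coe_le_coe.1 (e.le_iff_le.1 (Subtype.coe_le_coe.1 hab))
    · intro hab
      exact Subtype.coe_le_coe.2 (e.le_iff_le.2 hab)

end Machinery

theorem Ici_nearEulerian_or_boundary
    (α : Type) [PartialOrder α] [Finite α] [OrderBot α] (n : ℕ)
    (h : IsNearEulerianOfRank α n) :
    (∀ x : α, x ∈ boundary α n → IsNearEulerianOfRank (Set.Ici x) (n - rho x)) ∧
    (∀ x : α, x ∉ boundary α n → IsBoundaryOfEulerianOfRank (Set.Ici x) (n - rho x)) := by
  classical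
  obtain ⟨Q, _instQ, _finQ, q, top, hE, htop, hrq, hqt, ⟨e⟩⟩ := h
  obtain ⟨⟨b, hb⟩, -, hg, hbal⟩ := hE
  rcases Nat.eq_zero_or_pos n with rfl | hn
  · -- the rank-0 case is impossible
    exfalso
    have hbq : b = q := by
      by_contra hne
      have := rho_strict_mono hg (lt_of_le_of_ne (hb q) hne)
      rw [hrq] at this
      omega
    set z := e (⊥ : α) with hzdef
    have hz1 : b < z.val := lt_of_le_of_ne (hb z.val) (fun h => z.2.1 (h.symm.trans hbq))
    have h2 := rho_strict_mono hg hz1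
    have h3 : rho b = 0 := by rw [hbq, hrq]
    exact z.2.2 (eq_top_of_rho hg htop (by omega))
  · -- main case
    have hrhoc : ∀ x : α, rho x = rho (e x).val := by
      intro x
      rw [← rho_orderIso e x]
      exact rho_compl hg htop hrq (e x)
    have hrle : ∀ x : α, rho (e x).val ≤ n := by
      intro x
      by_contra hc
      push_neg at hc
      exact (e x).2.2 (eq_top_of_rho hg htop (by omega))
    have hchar : ∀ x : α, x ∈ boundary α n ↔ (e x).val < q := by
      intro x
      constructor
      · rintro ⟨-, x', -, hrx', hcov, hxx'⟩
        rw [Set.sep_univ] at hcov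
        have h1 : {z : {w : Q // w ≠ q ∧ w ≠ top} | e x' ⋖ z}.ncard = 1 := by
          rw [ncard_covers_orderIso e x']
          exact hcov
        have hρ' : rho (e x').val + 2 = n + 1 := by
          have := hrhoc x'
          omega
        have hcq : (e x').val ⋖ q :=
          (covers_compl_ncard hg htop hbal hrq hqt (e x') hρ').1 h1
        exact lt_of_le_of_lt (Subtype.coe_le_coe.2 (e.le_iff_le.2 hxx')) hcq.lt
      · intro hvq
        obtain ⟨z, hz1, hz2⟩ := exists_covBy_between hg hvq
        have hzrho := rho_covBy hg hz2
        have hzq : z ≠ q := hz2.lt.ne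
        have hzt : z ≠ top := (hz2.lt.trans_le (htop q)).ne
        set zS : {w : Q // w ≠ q ∧ w ≠ top} := ⟨z, hzq, hzt⟩ with hzS
        set x' := e.symm zS with hx'
        have hex' : e x' = zS := e.apply_symm_apply zS
        refine ⟨Set.mem_univ x, x', Set.mem_univ x', ?_, ?_, ?_⟩
        · have h5 := hrhoc x'
          rw [hex'] at h5
          have : rho zS.val = rho z := rfl
          omega
        · rw [Set.sep_univ, ← ncard_covers_orderIso e x', hex']
          exact (covers_compl_ncard hg htop hbal hrq hqt zS
            (show rho z + 2 = n + 1 by omega)).2 hz2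
        · exact e.le_symm_apply.2 (Subtype.coe_le_coe.1 hz1)
    constructor
    · intro x hx
      have hvq : (e x).val < q := (hchar x).1 hx
      have hrv := hrle x
      have hrx := hrhoc x
      refine ⟨↥(Set.Icc (e x).val top), inferInstance, inferInstance,
        ⟨q, hvq.le, htop q⟩, ⟨top, htop _, le_rfl⟩, ?_, fun z => z.2.2, ?_, ?_,
        iso_Ici_near htop e x hvq.le⟩
      · have harith : n - rho x + 1 = (n + 1) - rho (e x).val := by omega
        rw [harith]
        exact ⟨⟨⟨(e x).val, le_rfl, htop _⟩, fun z => z.2.1⟩,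
          ⟨⟨top, htop _, le_rfl⟩, fun z => z.2.2⟩,
          isGraded_subtype (isGradedSet_Icc hg htop (e x).val),
          balanced_Icc_subtype hg htop hbal (e x).val⟩
      · rw [rho_subtype_Icc hg]
        show rho q - rho (e x).val = n - rho x
        omega
      · exact fun h => hqt (congrArg Subtype.val h)
    · intro x hx
      have hnlt : ¬ (e x).val < q := fun h => hx ((hchar x).2 h)
      have hnq : ∀ z : Q, (e x).val ≤ z → z ≠ q := by
        rintro z hz rfl
        exact hnlt (lt_of_le_of_ne hz (e x).2.1)
      have hrv := hrle x
      have hrx := hrhoc x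
      refine ⟨↥(Set.Icc (e x).val top), inferInstance, inferInstance,
        ⟨top, htop _, le_rfl⟩, ?_, fun z => z.2.2,
        iso_Ici_boundary htop e x hnq⟩
      have harith : n - rho x + 1 = (n + 1) - rho (e x).val := by omega
      rw [harith]
      exact ⟨⟨⟨(e x).val, le_rfl, htop _⟩, fun z => z.2.1⟩,
        ⟨⟨top, htop _, le_rfl⟩, fun z => z.2.2⟩,
        isGraded_subtype (isGradedSet_Icc hg htop (e x).val),
        balanced_Icc_subtype hg htop hbal (e x).val⟩


end CDIndex
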